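/- Let n ≥ 3 and consider the building-block graph B_n with nodes a_1,…,a_n and b_1,…,b_{n-1}, where for each i ∈ {1,…,n−1} there is an edge (a_i, a_{i+1}) with delay 1 and edges (a_i, b_i), (b_i, a_{i+1}) with delay 0, and all edges have capacity 1. Then the minimum, over all feasible integer flows of rate R = 2 from a_1 to a_n, of the maximum delay D(f) equals ⌈(n−1)/2⌉. -/

import Mathlib

/-- A directed network: each edge has a source node, a destination node,
a non-negative integer capacity and a non-negative integer delay. -/
structure Network (V : Type) (E : Type) where
  src : E → V
  dst : E → V
  cap : E → ℕ
  delay : E → ℕ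

namespace Network

variable {V E : Type}

/-- `N.IsPath s t p` : the list of edges `p` forms a directed path from `s` to `t`. -/
def IsPath (N : Network V E) : V → V → List E → Prop
  | s, t, [] => s = t
  | s, t, e :: es => N.src e = s ∧ N.IsPath (N.dst e) t es

/-- The delay of a path: the sum of the delays of its edges. -/
def pathDelay (N : Network V E) (p : List E) : ℕ := (p.map N.delay).sum

end Network

/-- A (path-based) flow from `s` to `t`: a finitely-supported assignment of
non-negative rates to `s`–`t` paths. -/
structure PathFlow {V E : Type} (N : Network V E) (s t : V) where
  f : List E →₀ ℝ
  nonneg : ∀ p, 0 ≤ f p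
  isPath : ∀ p ∈ f.support, N.IsPath s t p

namespace PathFlow

variable {V E : Type} [DecidableEq E] {N : Network V E} {s t : V}

/-- Total rate of the flow. -/
noncomputable def totalRate (F : PathFlow N s t) : ℝ := ∑ p ∈ F.f.support, F.f p

/-- Rate carried by edge `e`: the sum of the rates of all paths containing `e`. -/
noncomputable def edgeRate (F : PathFlow N s t) (e : E) : ℝ :=
  ∑ p ∈ F.f.support, if e ∈ p then F.f p else 0

/-- Feasibility with rate `R`: total rate is `R` and every edge capacity is respected. -/
def Feasible (F : PathFlow N s t) (R : ℝ) : Prop :=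
  F.totalRate = R ∧ ∀ e, F.edgeRate e ≤ (N.cap e : ℝ)

/-- The maximum delay over flow-carrying paths. -/
def maxDelay (F : PathFlow N s t) : ℕ := F.f.support.sup N.pathDelay

/-- An integer flow assigns a non-negative integer rate to every path. -/
def IsInteger (F : PathFlow N s t) : Prop := ∀ p, ∃ m : ℕ, F.f p = (m : ℝ)

end PathFlow
/-- Nodes of the partition-reduction graph `G'`: `Sum.inl i` is `w_i` (`i = 0,…,n`),
`Sum.inr i` is `v_{i+1}` (`i = 0,…,n-1`). -/
abbrev GV (n : ℕ) := Fin (n + 1) ⊕ Fin n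

/-- Edges of `G'`: `Sum.inl i` is the direct edge `(w_i, w_{i+1})` of delay `a i`;
`Sum.inr (Sum.inl i)` is `(w_i, v_{i+1})` and `Sum.inr (Sum.inr i)` is `(v_{i+1}, w_{i+1})`,
both of delay `0`. All edges have capacity `1`. -/
abbrev GE (n : ℕ) := Fin n ⊕ (Fin n ⊕ Fin n)

/-- The graph `G'` reduced from the partition problem. -/
def Gpart (n : ℕ) (a : Fin n → ℕ) : Network (GV n) (GE n) where
  src
    | Sum.inl i => Sum.inl i.castSucc
    | Sum.inr (Sum.inl i) => Sum.inl i.castSucc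
    | Sum.inr (Sum.inr i) => Sum.inr i
  dst
    | Sum.inl i => Sum.inl i.succ
    | Sum.inr (Sum.inl i) => Sum.inr i
    | Sum.inr (Sum.inr i) => Sum.inl i.succ
  cap := fun _ => 1
  delay
    | Sum.inl i => a i
    | Sum.inr _ => 0

/-- The building-block graph `B_n` of Fig. 3: spine nodes `a_1,…,a_n`
(`Sum.inl i` = `a_{i+1}`) and detour nodes `b_1,…,b_{n-1}` (`Sum.inr i` = `b_{i+1}`);
for each of the `n - 1` layers there is a direct edge `(a_i, a_{i+1})` of delay `1` and
a zero-delay two-edge route `(a_i, b_i), (b_i, a_{i+1})`; all edges have capacity `1`. -/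
abbrev Bblock (n : ℕ) : Network (GV (n - 1)) (GE (n - 1)) :=
  Gpart (n - 1) (fun _ => 1)

/-- The source `a_1` of `B_n`. -/
abbrev BblockSrc (n : ℕ) : GV (n - 1) := Sum.inl 0

/-- The sink `a_n` of `B_n`. -/
abbrev BblockSink (n : ℕ) : GV (n - 1) := Sum.inl (Fin.last (n - 1))


open Finset

@[reducible] instance listDecidableMem {α : Type*} [DecidableEq α] (a : α) (l : List α) :
    Decidable (a ∈ l) := List.instDecidableMemOfLawfulBEq a l

section Aux

variable {m : ℕ}

/-- Index of an edge (its layer). -/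
def edgeIdx {m : ℕ} : GE m → Fin m
  | Sum.inl i => i
  | Sum.inr (Sum.inl i) => i
  | Sum.inr (Sum.inr i) => i

/-- Crossing lemma: any path to the sink starting from a node at or before layer `i`
uses the direct edge of layer `i` or the first detour edge of layer `i`. -/
lemma crossing (a : Fin m → ℕ) (i : Fin m) :
    ∀ (p : List (GE m)) (v : GV m),
      (Gpart m a).IsPath v (Sum.inl (Fin.last m)) p →
      (∀ k, v = Sum.inl k → (k : ℕ) ≤ i) →
      (∀ k, v = Sum.inr k → (k : ℕ) < i) →
      Sum.inl i ∈ p ∨ Sum.inr (Sum.inl i) ∈ p := by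
  intro p
  induction p with
  | nil =>
    intro v hp h1 h2
    exfalso
    cases v with
    | inl k =>
      have : Sum.inl k = (Sum.inl (Fin.last m) : GV m) := hp
      have hk := h1 k rfl
      have : k = Fin.last m := by injection this
      subst this
      simp [Fin.last] at hk
      omega
    | inr k => exact absurd hp (by simp [Network.IsPath])
  | cons e es ih =>
    intro v hp h1 h2
    obtain ⟨hsrc, hrest⟩ := hp
    cases e with
    | inl j =>
      have hv : v = Sum.inl j.castSucc := hsrc.symm
      have hj : (j : ℕ) ≤ i := by simpa using h1 _ hv
      by_cases hji : j = i
      · subst hji; left; exact List.mem_cons_self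
      · have hji' : (j : ℕ) < (i : ℕ) := lt_of_le_of_ne hj (fun h => hji (Fin.ext h))
        have := ih _ hrest (by
          intro k hk
          have : k = j.succ := by simpa [Gpart] using hk.symm
          subst this; simp [Fin.succ]; omega) (by
          intro k hk; simp [Gpart] at hk)
        rcases this with h | h
        · left; exact List.mem_cons_of_mem _ h
        · right; exact List.mem_cons_of_mem _ h
    | inr e' =>
      cases e' with
      | inl j =>
        have hv : v = Sum.inl j.castSucc := hsrc.symm
        have hj : (j : ℕ) ≤ i := by simpa using h1 _ hv
        by_cases hji : j = i
        · subst hji; right; exact List.mem_cons_self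
        · have hji' : (j : ℕ) < (i : ℕ) := lt_of_le_of_ne hj (fun h => hji (Fin.ext h))
          have := ih _ hrest (by intro k hk; simp [Gpart] at hk) (by
            intro k hk
            have : k = j := by simpa [Gpart] using hk.symm
            subst this; exact hji')
          rcases this with h | h
          · left; exact List.mem_cons_of_mem _ h
          · right; exact List.mem_cons_of_mem _ h
      | inr j =>
        have hv : v = Sum.inr j := hsrc.symm
        have hj : (j : ℕ) < i := h2 _ hv
        have := ih _ hrest (by
          intro k hk
          have : k = j.succ := by simpa [Gpart] using hk.symm
          subst this; simp [Fin.succ]; omega) (by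
          intro k hk; simp [Gpart] at hk)
        rcases this with h | h
        · left; exact List.mem_cons_of_mem _ h
        · right; exact List.mem_cons_of_mem _ h

end Aux

section Aux2

variable {m : ℕ}

lemma pathDelay_eq_filter_length (p : List (GE m)) :
    (Gpart m (fun _ => 1)).pathDelay p = (p.filter (fun e => e.isLeft)).length := by
  induction p with
  | nil => rfl
  | cons e es ih =>
    cases e with
    | inl j => simp [Network.pathDelay, Gpart, List.filter] at ih ⊢; omega
    | inr e' => simpa [Network.pathDelay, Gpart, List.filter] using ih

lemma card_direct_le_pathDelay (p : List (GE m)) :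
    ((Finset.univ.filter (fun i : Fin m => Sum.inl i ∈ p)).card : ℕ)
      ≤ (Gpart m (fun _ => 1)).pathDelay p := by
  rw [pathDelay_eq_filter_length]
  calc (Finset.univ.filter (fun i : Fin m => Sum.inl i ∈ p)).card
      ≤ (p.filter (fun e => e.isLeft)).toFinset.card := by
        apply Finset.card_le_card_of_injOn (fun i => Sum.inl i)
        · intro i hi
          have hi : i ∈ Finset.univ ∧ Sum.inl i ∈ p := by simpa using hi
          simp [List.mem_toFinset, List.mem_filter, hi.2]
        · intro x _ y _ h; injection h
    _ ≤ (p.filter (fun e => e.isLeft)).length := List.toFinset_card_le _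

/-- The per-layer choices: `c j = true` means take the direct edge in layer `j`. -/
def chunkAux (m : ℕ) (c : ℕ → Bool) : ℕ → ℕ → List (GE m)
  | 0, _ => []
  | fuel+1, j =>
    if h : j < m then
      (if c j then [Sum.inl ⟨j, h⟩]
       else [Sum.inr (Sum.inl ⟨j, h⟩), Sum.inr (Sum.inr ⟨j, h⟩)]) ++ chunkAux m c fuel (j+1)
    else []

lemma chunkAux_isPath (a : Fin m → ℕ) (c : ℕ → Bool) :
    ∀ (fuel j : ℕ) (h : j + fuel = m),
      (Gpart m a).IsPath (Sum.inl ⟨j, by omega⟩) (Sum.inl (Fin.last m)) (chunkAux m c fuel j) := by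
  intro fuel
  induction fuel with
  | zero =>
    intro j h
    show (Sum.inl ⟨j, _⟩ : GV m) = Sum.inl (Fin.last m)
    subst h; rfl
  | succ fuel ih =>
    intro j h
    have hj : j < m := by omega
    rw [chunkAux, dif_pos hj]
    by_cases hc : c j
    · rw [if_pos hc]
      refine ⟨rfl, ?_⟩
      exact ih (j+1) (by omega)
    · rw [if_neg hc]
      exact ⟨rfl, rfl, ih (j+1) (by omega)⟩

lemma mem_chunkAux (c : ℕ → Bool) (e : GE m) :
    ∀ (fuel j : ℕ), e ∈ chunkAux m c fuel j ↔
      (j ≤ (edgeIdx e : ℕ) ∧ (edgeIdx e : ℕ) < j + fuel ∧ e.isLeft = c (edgeIdx e)) := by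
  intro fuel
  induction fuel with
  | zero => intro j; simp [chunkAux]; omega
  | succ fuel ih =>
    intro j
    by_cases hj : j < m
    · rw [chunkAux, dif_pos hj, List.mem_append, ih]
      constructor
      · rintro (h | ⟨h1, h2, h3⟩)
        · by_cases hc : c j
          · rw [if_pos hc] at h
            simp only [List.mem_singleton] at h
            subst h
            refine ⟨by simp only [edgeIdx]; omega, by simp only [edgeIdx]; omega, by simp [edgeIdx, hc]⟩
          · rw [if_neg hc] at h
            have hc' : c j = false := Bool.eq_false_iff.mpr hc
            simp only [List.mem_cons, List.mem_singleton, List.not_mem_nil, or_false] at h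
            rcases h with h | h <;> subst h <;>
              exact ⟨by simp only [edgeIdx]; omega, by simp only [edgeIdx]; omega, by simp [edgeIdx, hc']⟩
        · exact ⟨by omega, by omega, h3⟩
      · rintro ⟨h1, h2, h3⟩
        by_cases hje : (edgeIdx e : ℕ) = j
        · left
          cases e with
          | inl i =>
            have hij : i = ⟨j, hj⟩ := Fin.ext hje
            subst hij
            have hc : c j = true := by simpa [edgeIdx] using h3.symm
            simp [hc]
          | inr e' =>
            cases e' with
            | inl i =>
              have hij : i = ⟨j, hj⟩ := Fin.ext hje
              subst hij
              have hc : c j = false := by simpa [edgeIdx] using h3.symm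
              simp [hc]
            | inr i =>
              have hij : i = ⟨j, hj⟩ := Fin.ext hje
              subst hij
              have hc : c j = false := by simpa [edgeIdx] using h3.symm
              simp [hc]
        · right; exact ⟨by omega, by omega, h3⟩
    · rw [chunkAux, dif_neg hj]
      have : (edgeIdx e : ℕ) < m := (edgeIdx e).isLt
      simp; omega

lemma pathDelay_chunkAux (c : ℕ → Bool) :
    ∀ (fuel j : ℕ), j + fuel ≤ m →
      (Gpart m (fun _ => 1)).pathDelay (chunkAux m c fuel j)
        = (List.range' j fuel).countP c := by
  intro fuel
  induction fuel with
  | zero => intro j _; rfl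
  | succ fuel ih =>
    intro j h
    have hj : j < m := by omega
    rw [chunkAux, dif_pos hj, List.range'_succ, List.countP_cons]
    have hap : ∀ l1 l2 : List (GE m), (Gpart m (fun _ => 1)).pathDelay (l1 ++ l2)
        = (Gpart m (fun _ => 1)).pathDelay l1 + (Gpart m (fun _ => 1)).pathDelay l2 := by
      intro l1 l2; simp [Network.pathDelay]
    by_cases hc : c j
    · rw [if_pos hc, hap, ih (j+1) (by omega)]
      simp [Network.pathDelay, Gpart, hc]
      omega
    · rw [if_neg hc, hap, ih (j+1) (by omega)]
      simp [Network.pathDelay, Gpart, hc]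

lemma countP_range'_lt (k : ℕ) :
    ∀ (t s : ℕ), (List.range' s t).countP (fun x => decide (x < k))
      = min (s + t) k - min s k := by
  intro t
  induction t with
  | zero => intro s; simp
  | succ t ih =>
    intro s
    rw [List.range'_succ, List.countP_cons, ih (s+1)]
    by_cases h : s < k <;> simp [h] <;> omega

lemma countP_range'_ge (k : ℕ) :
    ∀ (t s : ℕ), (List.range' s t).countP (fun x => decide (k ≤ x))
      = (s + t) - min (s + t) k - (s - min s k) := by
  intro t
  induction t with
  | zero => intro s; simp
  | succ t ih =>
    intro s
    rw [List.range'_succ, List.countP_cons, ih (s+1)]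
    by_cases h : k ≤ s <;> simp [h] <;> omega

end Aux2

/-- **Lemma 2.** For `n ≥ 3`, the minimum over all feasible integer flows of rate `R = 2`
from `a_1` to `a_n` in `B_n` of the maximum delay `D(f)` equals `⌈(n-1)/2⌉`. -/
theorem bblock_int_min_max_delay (n : ℕ) (hn : 3 ≤ n) :
    IsLeast {D : ℕ | ∃ F : PathFlow (Bblock n) (BblockSrc n) (BblockSink n),
        F.IsInteger ∧ F.Feasible 2 ∧ F.maxDelay = D}
      ((n - 1 + 1) / 2) := by
  have hm : 2 ≤ n - 1 := by omega
  set m : ℕ := n - 1 with hmdef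
  set k : ℕ := (m + 1) / 2 with hkdef
  have hk1 : 1 ≤ k := by omega
  have hkm : k ≤ m := by omega
  have htarget : (n - 1 + 1) / 2 = k := rfl
  constructor
  · -- membership : construct the flow
    set c1 : ℕ → Bool := fun x => decide (x < k) with hc1
    set c2 : ℕ → Bool := fun x => decide (k ≤ x) with hc2
    set p1 : List (GE m) := chunkAux m c1 m 0 with hp1
    set p2 : List (GE m) := chunkAux m c2 m 0 with hp2
    have hsrc0 : (Sum.inl 0 : GV m) = Sum.inl (⟨0, by omega⟩ : Fin (m + 1)) := by
      congr 1
    have hpath1 : (Bblock n).IsPath (BblockSrc n) (BblockSink n) p1 := by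
      rw [show BblockSrc n = (Sum.inl 0 : GV m) from rfl, hsrc0]
      exact chunkAux_isPath (fun _ => 1) c1 m 0 (by omega)
    have hpath2 : (Bblock n).IsPath (BblockSrc n) (BblockSink n) p2 := by
      rw [show BblockSrc n = (Sum.inl 0 : GV m) from rfl, hsrc0]
      exact chunkAux_isPath (fun _ => 1) c2 m 0 (by omega)
    have hmem1 : ∀ e : GE m, e ∈ p1 ↔ ((edgeIdx e : ℕ) < m ∧ e.isLeft = c1 (edgeIdx e)) := by
      intro e
      rw [hp1, mem_chunkAux]
      simp
    have hmem2 : ∀ e : GE m, e ∈ p2 ↔ ((edgeIdx e : ℕ) < m ∧ e.isLeft = c2 (edgeIdx e)) := by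
      intro e
      rw [hp2, mem_chunkAux]
      simp
    have hne : p1 ≠ p2 := by
      intro h
      have h1 : (Sum.inl ⟨0, by omega⟩ : GE m) ∈ p1 := by
        rw [hmem1]
        constructor
        · simpa using by omega
        · simp [edgeIdx, hc1]; omega
      rw [h, hmem2] at h1
      have := h1.2
      simp [edgeIdx, hc2] at this
      omega
    set f : List (GE m) →₀ ℝ := Finsupp.single p1 1 + Finsupp.single p2 1 with hf
    have hfval : ∀ p, f p = (if p = p1 then (1:ℝ) else 0) + (if p = p2 then (1:ℝ) else 0) := by
      intro p
      simp [hf, Finsupp.single_apply, eq_comm]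
    have hfp1 : f p1 = 1 := by rw [hfval, if_pos rfl, if_neg hne]; norm_num
    have hfp2 : f p2 = 1 := by rw [hfval, if_neg (Ne.symm hne), if_pos rfl]; norm_num
    have hsupp : f.support = {p1, p2} := by
      rw [hf, Finsupp.support_add_eq]
      · rw [Finsupp.support_single_ne_zero _ one_ne_zero,
          Finsupp.support_single_ne_zero _ one_ne_zero]
        rfl
      · rw [Finsupp.support_single_ne_zero _ one_ne_zero,
          Finsupp.support_single_ne_zero _ one_ne_zero]
        simpa using hne
    refine ⟨⟨f, ?_, ?_⟩, ?_, ⟨?_, ?_⟩, ?_⟩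
    · intro p
      rw [hfval]
      have : ∀ q : List (GE m), (0:ℝ) ≤ if p = q then (1:ℝ) else 0 := by
        intro q; split <;> norm_num
      exact add_nonneg (this p1) (this p2)
    · intro p hp
      rw [hsupp] at hp
      simp only [Finset.mem_insert, Finset.mem_singleton] at hp
      rcases hp with rfl | rfl
      · exact hpath1
      · exact hpath2
    · -- integer
      intro p
      rw [hfval]
      by_cases h1 : p = p1
      · subst h1
        refine ⟨1, ?_⟩
        simp [hne]
      · by_cases h2 : p = p2
        · subst h2
          refine ⟨1, ?_⟩
          simp [Ne.symm hne, h1]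
        · exact ⟨0, by simp [h1, h2]⟩
    · -- total rate
      show ∑ p ∈ f.support, f p = 2
      rw [hsupp, Finset.sum_pair hne, hfp1, hfp2]
      norm_num
    · -- capacity
      intro e
      show ∑ p ∈ f.support, (if e ∈ p then f p else 0) ≤ ((Bblock n).cap e : ℝ)
      rw [hsupp, Finset.sum_pair hne]
      have hnot : ¬ (e ∈ p1 ∧ e ∈ p2) := by
        rintro ⟨h1, h2⟩
        rw [hmem1] at h1
        rw [hmem2] at h2
        rw [h1.2] at h2
        have := h2.2
        simp [hc1, hc2] at this
        omega
      have hcap : ((Bblock n).cap e : ℝ) = 1 := by norm_num [Gpart]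
      rw [hcap, hfp1, hfp2]
      by_cases h1 : e ∈ p1
      · rw [if_pos h1, if_neg (fun h2 => hnot ⟨h1, h2⟩)]
        norm_num
      · rw [if_neg h1]
        split <;> norm_num
    · -- max delay
      show f.support.sup (Bblock n).pathDelay = (n - 1 + 1) / 2
      rw [hsupp]
      rw [Finset.sup_insert, Finset.sup_singleton]
      have hd1 : (Bblock n).pathDelay p1 = k := by
        rw [hp1, pathDelay_chunkAux c1 m 0 (by omega), hc1, countP_range'_lt]
        omega
      have hd2 : (Bblock n).pathDelay p2 = m - k := by
        rw [hp2, pathDelay_chunkAux c2 m 0 (by omega), hc2, countP_range'_ge]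
        omega
      rw [hd1, hd2]
      exact sup_eq_left.mpr (by omega)
  · -- lower bound
    rintro D ⟨F, -, ⟨hrate, hcap⟩, hD⟩
    have hsum2 : ∑ p ∈ F.f.support, F.f p = 2 := hrate
    have key : ∀ i : Fin m, (1:ℝ) ≤ F.edgeRate (Sum.inl i) := by
      intro i
      have hsplit : (2:ℝ) ≤ F.edgeRate (Sum.inl i) + F.edgeRate (Sum.inr (Sum.inl i)) := by
        rw [← hsum2]
        unfold PathFlow.edgeRate
        rw [← Finset.sum_add_distrib]
        apply Finset.sum_le_sum
        intro p hp
        have hcross := crossing (fun _ => 1) i p (BblockSrc n) (F.isPath p hp)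
          (by
            intro kk hkk
            have h : (0 : Fin (m + 1)) = kk := by injection hkk
            subst h
            simp)
          (by intro kk hkk; exact absurd hkk (by simp [BblockSrc]))
        have hnn := F.nonneg p
        rcases hcross with h | h
        · rw [if_pos h]
          split <;> linarith
        · rw [if_pos h]
          split <;> linarith
      have hcap1 : F.edgeRate (Sum.inr (Sum.inl i)) ≤ 1 := by
        have := hcap (Sum.inr (Sum.inl i))
        simpa [Gpart] using this
      linarith
    have hbig : (m : ℝ) ≤ ∑ i : Fin m, F.edgeRate (Sum.inl i) := by
      calc (m : ℝ) = ∑ _i : Fin m, (1:ℝ) := by simp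
        _ ≤ _ := Finset.sum_le_sum (fun i _ => key i)
    have hswap : ∑ i : Fin m, F.edgeRate (Sum.inl i)
        = ∑ p ∈ F.f.support, ∑ i : Fin m, (if (Sum.inl i : GE m) ∈ p then F.f p else 0) := by
      unfold PathFlow.edgeRate
      rw [Finset.sum_comm]
    have hperp : ∀ p ∈ F.f.support,
        ∑ i : Fin m, (if (Sum.inl i : GE m) ∈ p then F.f p else 0)
          ≤ ((Bblock n).pathDelay p : ℝ) * F.f p := by
      intro p hp
      have hnn := F.nonneg p
      calc ∑ i : Fin m, (if (Sum.inl i : GE m) ∈ p then F.f p else 0)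
          = ∑ i ∈ Finset.univ.filter (fun i : Fin m => (Sum.inl i : GE m) ∈ p), F.f p := by
            rw [Finset.sum_filter]
        _ = ((Finset.univ.filter (fun i : Fin m => (Sum.inl i : GE m) ∈ p)).card : ℝ) * F.f p := by
            rw [Finset.sum_const, nsmul_eq_mul]
        _ ≤ ((Bblock n).pathDelay p : ℝ) * F.f p := by
            apply mul_le_mul_of_nonneg_right _ hnn
            exact_mod_cast card_direct_le_pathDelay p
    have hdelD : ∀ p ∈ F.f.support, ((Bblock n).pathDelay p : ℝ) ≤ (D : ℝ) := by
      intro p hp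
      have : (Bblock n).pathDelay p ≤ F.maxDelay := Finset.le_sup hp
      rw [hD] at this
      exact_mod_cast this
    have hfin : (m : ℝ) ≤ 2 * D := by
      calc (m:ℝ) ≤ ∑ i : Fin m, F.edgeRate (Sum.inl i) := hbig
        _ = ∑ p ∈ F.f.support, ∑ i : Fin m, (if (Sum.inl i : GE m) ∈ p then F.f p else 0) := hswap
        _ ≤ ∑ p ∈ F.f.support, ((Bblock n).pathDelay p : ℝ) * F.f p :=
            Finset.sum_le_sum hperp
        _ ≤ ∑ p ∈ F.f.support, (D : ℝ) * F.f p := by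
            apply Finset.sum_le_sum
            intro p hp
            exact mul_le_mul_of_nonneg_right (hdelD p hp) (F.nonneg p)
        _ = (D : ℝ) * ∑ p ∈ F.f.support, F.f p := by rw [Finset.mul_sum]
        _ = 2 * D := by rw [hsum2]; ring
    have : m ≤ 2 * D := by exact_mod_cast hfin
    omega
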